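/- For integers n ≥ 1 and sequences 0 ≤ m_n ≤ ⋯ ≤ m_1 of nonnegative integers, define c_{m_1} (q) = 1 (and the empty coefficient equal to 1) and inductively c_{m_k,…,m_1}(q) = q^{k(k-1)m_k} ∑_{j=0}^{k-1} (-1)^{k+j+1} [k choose j]_q q^{(k-j)(k-1) - j(j-1)m_k} c_{m_j,…,m_1}(q) δ_{m_{j+1}, m_k}. Then for any integer a with 0 ≤ a ≤ m_k, c_{m_k−a,…,m_1−a}(q) = q^{−k(k−1)a} c_{m_k,…,m_1}(q). -/

import Mathlib

open Finset

noncomputable def qq : RatFunc ℂ := RatFunc.X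

noncomputable def qint (m : ℕ) : RatFunc ℂ := (qq ^ m - qq⁻¹ ^ m) / (qq - qq⁻¹)

noncomputable def qfact : ℕ → RatFunc ℂ
  | 0 => 1
  | n + 1 => qint (n + 1) * qfact n

noncomputable def qbinom (n r : ℕ) : RatFunc ℂ :=
  if r ≤ n then qfact n / (qfact (n - r) * qfact r) else 0

/-- The coefficients `c_{m_k,…,m_1}(q)` defined by the paper's recursion
(`m i` is the entry `m_i`; the empty coefficient is `1`). -/
noncomputable def cC (m : ℕ → ℕ) : ℕ → RatFunc ℂ
  | 0 => 1
  | k + 1 =>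
      qq ^ ((k + 1) * k * m (k + 1)) *
        ∑ j ∈ (Finset.range (k + 1)).attach,
          (-1 : RatFunc ℂ) ^ (k + 1 + j.1 + 1) * qbinom (k + 1) j.1 *
            qq ^ ((k + 1 - j.1) * k) * qq⁻¹ ^ (j.1 * (j.1 - 1) * m (k + 1)) *
            (if m (j.1 + 1) = m (k + 1) then cC m j.1 else 0)
  termination_by k => k
  decreasing_by exact Finset.mem_range.mp j.2

lemma qq_ne : qq ≠ 0 := RatFunc.X_ne_zero

lemma pow_sub_helper (N a mm : ℕ) (h : a ≤ mm) :
    qq ^ (N * (mm - a)) = qq⁻¹ ^ (N * a) * qq ^ (N * mm) := by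
  have : qq⁻¹ ^ (N * a) * qq ^ (N * mm)
      = qq⁻¹ ^ (N * a) * (qq ^ (N * (mm - a)) * qq ^ (N * a)) := by
    rw [← pow_add, ← Nat.mul_add, Nat.sub_add_cancel h]
  rw [this, mul_comm (qq ^ (N * (mm - a))), ← mul_assoc, inv_pow,
    inv_mul_cancel₀ (pow_ne_zero _ qq_ne), one_mul]

lemma stmt5_aux (m : ℕ → ℕ)
    (hmono : ∀ i j : ℕ, 1 ≤ i → i ≤ j → m j ≤ m i) (a : ℕ) :
    ∀ k : ℕ, (1 ≤ k → a ≤ m k) →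
      cC (fun i => m i - a) k = qq⁻¹ ^ (k * (k - 1) * a) * cC m k := by
  intro k
  induction k using Nat.strong_induction_on with
  | _ k ih =>
    match k with
    | 0 => intro _; simp [cC]
    | k + 1 =>
      intro ha
      have ha' : a ≤ m (k + 1) := ha (by omega)
      rw [cC, cC]
      have hsum :
          (∑ j ∈ (Finset.range (k + 1)).attach,
            (-1 : RatFunc ℂ) ^ (k + 1 + j.1 + 1) * qbinom (k + 1) j.1 *
              qq ^ ((k + 1 - j.1) * k) *
              qq⁻¹ ^ (j.1 * (j.1 - 1) * ((fun i => m i - a) (k + 1))) *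
              (if (fun i => m i - a) (j.1 + 1) = (fun i => m i - a) (k + 1)
                then cC (fun i => m i - a) j.1 else 0))
          = ∑ j ∈ (Finset.range (k + 1)).attach,
            (-1 : RatFunc ℂ) ^ (k + 1 + j.1 + 1) * qbinom (k + 1) j.1 *
              qq ^ ((k + 1 - j.1) * k) * qq⁻¹ ^ (j.1 * (j.1 - 1) * m (k + 1)) *
              (if m (j.1 + 1) = m (k + 1) then cC m j.1 else 0) := by
        refine Finset.sum_congr rfl fun j _ => ?_
        have hj : j.1 < k + 1 := Finset.mem_range.mp j.2
        have hle : m (k + 1) ≤ m (j.1 + 1) := hmono (j.1 + 1) (k + 1) (by omega) (by omega)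
        simp only
        by_cases hc : m (j.1 + 1) = m (k + 1)
        · have hc' : m (j.1 + 1) - a = m (k + 1) - a := by omega
          rw [if_pos hc', if_pos hc]
          have hIH : cC (fun i => m i - a) j.1
              = qq⁻¹ ^ (j.1 * (j.1 - 1) * a) * cC m j.1 := by
            refine ih j.1 hj fun h1 => ?_
            exact le_trans ha' (hmono j.1 (k + 1) h1 (by omega))
          rw [hIH]
          have hexp : j.1 * (j.1 - 1) * (m (k + 1) - a) + j.1 * (j.1 - 1) * a
              = j.1 * (j.1 - 1) * m (k + 1) := by
            rw [← Nat.mul_add, Nat.sub_add_cancel ha']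
          calc (-1 : RatFunc ℂ) ^ (k + 1 + j.1 + 1) * qbinom (k + 1) j.1 *
                qq ^ ((k + 1 - j.1) * k) * qq⁻¹ ^ (j.1 * (j.1 - 1) * (m (k + 1) - a)) *
                (qq⁻¹ ^ (j.1 * (j.1 - 1) * a) * cC m j.1)
              = (-1 : RatFunc ℂ) ^ (k + 1 + j.1 + 1) * qbinom (k + 1) j.1 *
                qq ^ ((k + 1 - j.1) * k) *
                (qq⁻¹ ^ (j.1 * (j.1 - 1) * (m (k + 1) - a)) *
                  qq⁻¹ ^ (j.1 * (j.1 - 1) * a)) * cC m j.1 := by ring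
            _ = _ := by rw [← pow_add, hexp]
        · have hc' : ¬ (m (j.1 + 1) - a = m (k + 1) - a) := by omega
          rw [if_neg hc', if_neg hc, mul_zero, mul_zero]
      simp only at hsum ⊢
      rw [hsum, pow_sub_helper _ _ _ ha']
      have : (k + 1) * (k + 1 - 1) * a = (k + 1) * k * a := by rw [Nat.add_sub_cancel]
      rw [this, mul_assoc]

/-- shifting all entries down by `a` rescales `c` by `q^{-k(k-1)a}`. -/
theorem stmt5 (m : ℕ → ℕ) (k : ℕ) (hk : 1 ≤ k)
    (hmono : ∀ i j : ℕ, 1 ≤ i → i ≤ j → m j ≤ m i)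
    (a : ℕ) (ha : a ≤ m k) :
    cC (fun i => m i - a) k = qq⁻¹ ^ (k * (k - 1) * a) * cC m k := by
  exact stmt5_aux m hmono a k (fun _ => ha)
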